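/- Let G be a group and x ∈ G an element of infinite order such that ⟨x⟩ is normal in the normal closure ⟨x^G⟩. Then x is central in ⟨x^G⟩; in particular ⟨x^G⟩ is abelian. -/

import Mathlib

section aux

variable {G : Type*} [Group G]

private lemma conj_key (x : G) (hx : ¬ IsOfFinOrder x)
    (h : ((Subgroup.zpowers x).subgroupOf (Subgroup.normalClosure {x})).Normal)
    {a : G} (ha : a ∈ Subgroup.normalClosure {x}) :
    a * x * a⁻¹ = x ∨ a * x * a⁻¹ = x⁻¹ := by
  have hxN : x ∈ Subgroup.normalClosure ({x} : Set G) :=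
    Subgroup.subset_normalClosure rfl
  have hinj : Function.Injective (fun n : ℤ => x ^ n) :=
    injective_zpow_iff_not_isOfFinOrder.2 hx
  have hxmem : (⟨x, hxN⟩ : Subgroup.normalClosure ({x} : Set G)) ∈
      (Subgroup.zpowers x).subgroupOf (Subgroup.normalClosure {x}) := by
    rw [Subgroup.mem_subgroupOf]
    exact Subgroup.mem_zpowers x
  have key : ∀ b : G, ∀ hb : b ∈ Subgroup.normalClosure ({x} : Set G),
      ∃ k : ℤ, x ^ k = b * x * b⁻¹ := by
    intro b hb
    have := h.conj_mem _ hxmem ⟨b, hb⟩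
    rw [Subgroup.mem_subgroupOf] at this
    exact Subgroup.mem_zpowers_iff.1 this
  obtain ⟨k, hk⟩ := key a ha
  obtain ⟨m, hm⟩ := key a⁻¹ (inv_mem ha)
  have hmk : x ^ (k * m) = x ^ (1 : ℤ) := by
    have : a * (x ^ m) * a⁻¹ = x := by
      rw [hm]; group
    calc x ^ (k * m) = (x ^ k) ^ m := by rw [zpow_mul]
    _ = (a * x * a⁻¹) ^ m := by rw [hk]
    _ = a * x ^ m * a⁻¹ := by rw [conj_zpow]
    _ = x := this
    _ = x ^ (1 : ℤ) := (zpow_one x).symm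
  have hkm1 : k * m = 1 := hinj hmk
  have : k = 1 ∨ k = -1 := Int.isUnit_iff.1 (IsUnit.of_mul_eq_one m hkm1)
  rcases this with h1 | h1
  · left; rw [← hk, h1, zpow_one]
  · right; rw [← hk, h1, zpow_neg_one]

private lemma conj_key' (x : G) (hx : ¬ IsOfFinOrder x)
    (h : ((Subgroup.zpowers x).subgroupOf (Subgroup.normalClosure {x})).Normal)
    (g : G) {a : G} (ha : a ∈ Subgroup.normalClosure {x}) :
    a * (g * x * g⁻¹) * a⁻¹ = g * x * g⁻¹ ∨
      a * (g * x * g⁻¹) * a⁻¹ = (g * x * g⁻¹)⁻¹ := by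
  have ha' : g⁻¹ * a * g ∈ Subgroup.normalClosure ({x} : Set G) := by
    have := (Subgroup.normalClosure_normal (s := ({x} : Set G))).conj_mem a ha g⁻¹
    simpa using this
  rcases conj_key x hx h ha' with h1 | h1
  · left
    have : g * ((g⁻¹ * a * g) * x * (g⁻¹ * a * g)⁻¹) * g⁻¹ = g * x * g⁻¹ := by rw [h1]
    calc a * (g * x * g⁻¹) * a⁻¹
        = g * ((g⁻¹ * a * g) * x * (g⁻¹ * a * g)⁻¹) * g⁻¹ := by group
      _ = g * x * g⁻¹ := this
  · right
    have : g * ((g⁻¹ * a * g) * x * (g⁻¹ * a * g)⁻¹) * g⁻¹ = g * x⁻¹ * g⁻¹ := by rw [h1]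
    calc a * (g * x * g⁻¹) * a⁻¹
        = g * ((g⁻¹ * a * g) * x * (g⁻¹ * a * g)⁻¹) * g⁻¹ := by group
      _ = g * x⁻¹ * g⁻¹ := this
      _ = (g * x * g⁻¹)⁻¹ := by group

/-- every conjugate of x commutes with x -/
private lemma conj_comm_x (x : G) (hx : ¬ IsOfFinOrder x)
    (h : ((Subgroup.zpowers x).subgroupOf (Subgroup.normalClosure {x})).Normal)
    (g : G) : (g * x * g⁻¹) * x = x * (g * x * g⁻¹) := by
  set y := g * x * g⁻¹ with hy
  have hinj : Function.Injective (fun n : ℤ => x ^ n) :=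
    injective_zpow_iff_not_isOfFinOrder.2 hx
  have hxN : x ∈ Subgroup.normalClosure ({x} : Set G) :=
    Subgroup.subset_normalClosure rfl
  have hyN : y ∈ Subgroup.normalClosure ({x} : Set G) :=
    (Subgroup.normalClosure_normal).conj_mem x hxN g
  rcases conj_key x hx h hyN with h1 | h1
  · -- y x y⁻¹ = x
    calc y * x = (y * x * y⁻¹) * y := by group
      _ = x * y := by rw [h1]
  · -- y x y⁻¹ = x⁻¹ : derive contradiction
    exfalso
    have hyx : y * x = x⁻¹ * y := by
      calc y * x = (y * x * y⁻¹) * y := by group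
        _ = x⁻¹ * y := by rw [h1]
    rcases conj_key' x hx h g hxN with h3 | h3
    · -- x y x⁻¹ = y, so x y = y x; with y x = x⁻¹ y get x = x⁻¹
      have hxy : x * y = y * x := by
        calc x * y = (x * y * x⁻¹) * x := by group
          _ = y * x := by rw [h3]
      have hxx : x * y = x⁻¹ * y := hxy.trans hyx
      have hx2 : x ^ (2 : ℤ) = x ^ (0 : ℤ) := by
        have : x = x⁻¹ := mul_right_cancel hxx
        calc x ^ (2 : ℤ) = x * x := by
              rw [show (2 : ℤ) = 1 + 1 by norm_num, zpow_add, zpow_one]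
          _ = x * x⁻¹ := by rw [← this]
          _ = x ^ (0 : ℤ) := by group
      have := hinj hx2
      norm_num at this
    · -- x y x⁻¹ = y⁻¹, so x y = y⁻¹ x
      have hxy : x * y = y⁻¹ * x := by
        calc x * y = (x * y * x⁻¹) * x := by group
          _ = y⁻¹ * x := by rw [h3]
      -- y = y⁻¹ x², hence y² = x²
      have hy2 : y * y = x * x := by
        have e1 : x * (y * x) = y := by
          rw [hyx]; group
        have e2 : x * y * x = y⁻¹ * (x * x) := by
          rw [hxy]; group
        have : y = y⁻¹ * (x * x) := by
          calc y = x * (y * x) := e1.symm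
            _ = x * y * x := by group
            _ = y⁻¹ * (x * x) := e2
        calc y * y = y * (y⁻¹ * (x * x)) := by rw [← this]
          _ = x * x := by group
      -- y x² y⁻¹ = x⁻² but also = y² = x²
      have hc : x * x = x⁻¹ * x⁻¹ := by
        calc x * x = y * y := hy2.symm
          _ = y * (y * y) * y⁻¹ := by group
          _ = y * (x * x) * y⁻¹ := by rw [hy2]
          _ = (y * x * y⁻¹) * (y * x * y⁻¹) := by group
          _ = x⁻¹ * x⁻¹ := by rw [h1]
      have hx4 : x ^ (4 : ℤ) = x ^ (0 : ℤ) := by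
        calc x ^ (4 : ℤ) = (x * x) * (x * x) := by
              rw [show (4 : ℤ) = (1 + 1) + (1 + 1) by norm_num, zpow_add, zpow_add, zpow_one]
          _ = (x * x) * (x⁻¹ * x⁻¹) := by rw [hc]
          _ = x ^ (0 : ℤ) := by group
      have := hinj hx4
      norm_num at this

end aux

theorem stmt_3 {G : Type*} [Group G] (x : G) (hx : ¬ IsOfFinOrder x)
    (h : ((Subgroup.zpowers x).subgroupOf (Subgroup.normalClosure {x})).Normal) :
    (∀ a ∈ Subgroup.normalClosure {x}, a * x = x * a) ∧
    (∀ a ∈ Subgroup.normalClosure {x}, ∀ b ∈ Subgroup.normalClosure ({x} : Set G),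
      a * b = b * a) := by
  have part1 : ∀ a ∈ Subgroup.normalClosure ({x} : Set G), a * x = x * a := by
    have hle : Subgroup.normalClosure ({x} : Set G) ≤ Subgroup.centralizer {x} := by
      rw [Subgroup.normalClosure]
      rw [Subgroup.closure_le]
      intro y hy
      rw [Group.mem_conjugatesOfSet_iff] at hy
      obtain ⟨a, ha, hconj⟩ := hy
      rcases ha with rfl
      obtain ⟨c, hc⟩ := isConj_iff.1 hconj
      rw [SetLike.mem_coe, Subgroup.mem_centralizer_iff]
      intro m hm
      rw [Set.mem_singleton_iff] at hm; subst hm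
      rw [← hc]
      exact (conj_comm_x m hx h c).symm
    intro a ha
    exact (Subgroup.mem_centralizer_iff.1 (hle ha) x rfl).symm
  refine ⟨part1, ?_⟩
  intro a ha b hb
  have hle : Subgroup.normalClosure ({x} : Set G) ≤ Subgroup.centralizer {b} := by
    rw [Subgroup.normalClosure, Subgroup.closure_le]
    intro y hy
    rw [Group.mem_conjugatesOfSet_iff] at hy
    obtain ⟨z, hz, hconj⟩ := hy
    rcases hz with rfl
    obtain ⟨c, hc⟩ := isConj_iff.1 hconj
    rw [SetLike.mem_coe, Subgroup.mem_centralizer_iff]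
    intro m hm
    rw [Set.mem_singleton_iff] at hm
    rw [hm]
    have hb' : c⁻¹ * b * c ∈ Subgroup.normalClosure ({z} : Set G) := by
      have := (Subgroup.normalClosure_normal (s := ({z} : Set G))).conj_mem b hb c⁻¹
      simpa using this
    have hcomm : (c⁻¹ * b * c) * z = z * (c⁻¹ * b * c) := part1 _ hb'
    have e : (c⁻¹ * b * c) * z * (c⁻¹ * b * c)⁻¹ = z := by
      rw [hcomm]; group
    calc b * y = c * ((c⁻¹ * b * c) * z * (c⁻¹ * b * c)⁻¹) * c⁻¹ * b := by
          rw [← hc]; group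
      _ = c * z * c⁻¹ * b := by rw [e]
      _ = y * b := by rw [hc]
  exact (Subgroup.mem_centralizer_iff.1 (hle ha) b rfl).symm
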